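/- Let G_• be a filtered group of degree s and k ≥ 2. If F is a face of {0,1}^k of dimension 0 (a single vertex ω_0) and x ∈ G, then [x]_{{ω_0}} ∈ HK^k(G_•) if and only if x ∈ G_k (equivalently, x is the identity when k > s). -/

import Mathlib

open Subgroup

/-- A filtration on a group `G`: a chain `G = G₀ ⊇ G₁ ⊇ ...` of subgroups with
`[Gᵢ, Gⱼ] ⊆ G_{i+j}` for all `i j`. -/
structure IsGroupFiltration {G : Type*} [Group G] (Gf : ℕ → Subgroup G) : Prop where
  top : Gf 0 = ⊤
  mono : ∀ i, Gf (i + 1) ≤ Gf i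
  comm : ∀ i j, ⁅Gf i, Gf j⁆ ≤ Gf (i + j)

/-- The top vertex `(1,…,1)` of the discrete cube `{0,1}^k`. -/
def topVert (k : ℕ) : Fin k → Bool := fun _ => true

/-- The configuration `[x]_{F_S}`: equal to `x` on the upper face `F_S = {ω : ω ⊇ S}`
and the identity elsewhere. -/
def upperFaceConfig {G : Type*} [Group G] {k : ℕ} (S : Finset (Fin k)) (x : G) :
    (Fin k → Bool) → G :=
  fun ω => if ∀ i ∈ S, ω i = true then x else 1

/-- The Host–Kra cube group `HK^k(G_•)`: the subgroup of `G^{{0,1}^k}` generated by the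
configurations `[x]_{F_S}` with `x ∈ G_{|S|}`. -/
def hostKra {G : Type*} [Group G] (Gf : ℕ → Subgroup G) (k : ℕ) :
    Subgroup ((Fin k → Bool) → G) :=
  Subgroup.closure { c | ∃ (S : Finset (Fin k)) (x : G), x ∈ Gf S.card ∧ c = upperFaceConfig S x }

namespace HKaux

open scoped commutatorElement

variable {G : Type*} [Group G]

lemma hostKra_def (Gf : ℕ → Subgroup G) (k : ℕ) :
    hostKra Gf k = Subgroup.closure
      { c | ∃ (S : Finset (Fin k)) (x : G), x ∈ Gf S.card ∧ c = upperFaceConfig S x } := rfl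

lemma gf_antitone (Gf : ℕ → Subgroup G) (hmono : ∀ i, Gf (i+1) ≤ Gf i)
    {m n : ℕ} (h : m ≤ n) : Gf n ≤ Gf m := by
  induction h with
  | refl => exact le_rfl
  | step h ih => exact le_trans (hmono _) ih

lemma shift_mono (Gf : ℕ → Subgroup G) (hmono : ∀ i, Gf (i+1) ≤ Gf i) :
    ∀ i, Gf (i+1+1) ≤ Gf (i+1) := fun i => hmono (i+1)

lemma shift_comm (Gf : ℕ → Subgroup G) (hmono : ∀ i, Gf (i+1) ≤ Gf i)
    (hcomm : ∀ i j, ⁅Gf i, Gf j⁆ ≤ Gf (i+j)) :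
    ∀ i j, ⁅Gf (i+1), Gf (j+1)⁆ ≤ Gf (i+j+1) := by
  intro i j
  exact le_trans (hcomm (i+1) (j+1)) (gf_antitone Gf hmono (by omega))

lemma upper_mem (Gf : ℕ → Subgroup G) {k : ℕ} (S : Finset (Fin k)) {x : G}
    (hx : x ∈ Gf S.card) : upperFaceConfig S x ∈ hostKra Gf k :=
  Subgroup.subset_closure ⟨S, x, hx, rfl⟩

lemma upper_inv {k : ℕ} (S : Finset (Fin k)) (x : G) :
    (upperFaceConfig S x)⁻¹ = upperFaceConfig S x⁻¹ := by
  funext ω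
  show (upperFaceConfig S x ω)⁻¹ = _
  simp only [upperFaceConfig]
  split_ifs <;> simp

lemma upper_comm {k : ℕ} (S T : Finset (Fin k)) (y z : G) :
    ⁅upperFaceConfig S y, upperFaceConfig T z⁆ = upperFaceConfig (S ∪ T) ⁅y, z⁆ := by
  funext ω
  show ⁅upperFaceConfig S y ω, upperFaceConfig T z ω⁆ = _
  simp only [upperFaceConfig]
  by_cases hS : ∀ i ∈ S, ω i = true <;> by_cases hT : ∀ i ∈ T, ω i = true
  · rw [if_pos hS, if_pos hT, if_pos (Finset.forall_mem_union.mpr ⟨hS, hT⟩)]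
  · rw [if_pos hS, if_neg hT, if_neg (fun h => hT (Finset.forall_mem_union.mp h).2),
      commutatorElement_one_right]
  · rw [if_neg hS, if_pos hT, if_neg (fun h => hS (Finset.forall_mem_union.mp h).1),
      commutatorElement_one_left]
  · rw [if_neg hS, if_neg hT, if_neg (fun h => hS (Finset.forall_mem_union.mp h).1),
      commutatorElement_one_left]

lemma hostKra_le_normalizer (Gf : ℕ → Subgroup G)
    (hmono : ∀ i, Gf (i+1) ≤ Gf i) (hcomm : ∀ i j, ⁅Gf i, Gf j⁆ ≤ Gf (i+j)) (k : ℕ) :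
    hostKra Gf k ≤ Subgroup.normalizer (hostKra (fun i => Gf (i+1)) k : Set ((Fin k → Bool) → G)) := by
  have key : ∀ (T : Finset (Fin k)) (z : G), z ∈ Gf T.card →
      ∀ h ∈ hostKra (fun i => Gf (i+1)) k,
      upperFaceConfig T z * h * (upperFaceConfig T z)⁻¹ ∈ hostKra (fun i => Gf (i+1)) k := by
    intro T z hz h hh
    rw [hostKra_def] at hh
    induction hh using Subgroup.closure_induction with
    | mem g hg =>
      obtain ⟨S, y, hy, rfl⟩ := hg
      have hy' : y ∈ Gf (S.card + 1) := hy
      have h1 : upperFaceConfig T z * upperFaceConfig S y * (upperFaceConfig T z)⁻¹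
          = ⁅upperFaceConfig T z, upperFaceConfig S y⁆ * upperFaceConfig S y := by
        rw [commutatorElement_def]; group
      rw [h1, upper_comm]
      refine mul_mem (upper_mem _ _ ?_) (upper_mem _ _ hy)
      show ⁅z, y⁆ ∈ Gf ((T ∪ S).card + 1)
      refine gf_antitone Gf hmono ?_
        (hcomm T.card (S.card + 1) (Subgroup.commutator_mem_commutator hz hy'))
      have := Finset.card_union_le T S
      omega
    | one => simpa using one_mem _
    | mul a b ha hb pa pb =>
      have e : upperFaceConfig T z * (a * b) * (upperFaceConfig T z)⁻¹
          = (upperFaceConfig T z * a * (upperFaceConfig T z)⁻¹)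
            * (upperFaceConfig T z * b * (upperFaceConfig T z)⁻¹) := by group
      rw [e]; exact mul_mem pa pb
    | inv a ha pa =>
      have e : upperFaceConfig T z * a⁻¹ * (upperFaceConfig T z)⁻¹
          = (upperFaceConfig T z * a * (upperFaceConfig T z)⁻¹)⁻¹ := by group
      rw [e]; exact inv_mem pa
  rw [hostKra_def]
  refine (Subgroup.closure_le _).mpr ?_
  rintro g ⟨T, z, hz, rfl⟩
  rw [SetLike.mem_coe, Subgroup.mem_normalizer_iff]
  intro h
  constructor
  · intro hh; exact key T z hz h hh
  · intro hh
    have h2 := key T z⁻¹ (inv_mem hz) _ hh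
    rw [← upper_inv] at h2
    have e : (upperFaceConfig T z)⁻¹
        * (upperFaceConfig T z * h * (upperFaceConfig T z)⁻¹)
        * ((upperFaceConfig T z)⁻¹)⁻¹ = h := by group
    rwa [e] at h2

lemma conj_mem_hostKra (Gf : ℕ → Subgroup G)
    (hmono : ∀ i, Gf (i+1) ≤ Gf i) (hcomm : ∀ i j, ⁅Gf i, Gf j⁆ ≤ Gf (i+j)) (k : ℕ)
    {g d : (Fin k → Bool) → G} (hg : g ∈ hostKra Gf k)
    (hd : d ∈ hostKra (fun i => Gf (i+1)) k) :
    g * d * g⁻¹ ∈ hostKra (fun i => Gf (i+1)) k := by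
  have h := hostKra_le_normalizer Gf hmono hcomm k hg
  rw [Subgroup.mem_normalizer_iff] at h
  exact (h d).mp hd

/-- Restriction to the bottom/top face in the last coordinate. -/
def res {k : ℕ} (b : Bool) : ((Fin (k+1) → Bool) → G) →* ((Fin k → Bool) → G) where
  toFun c := fun ω => c (Fin.snoc ω b)
  map_one' := rfl
  map_mul' _ _ := rfl

def down {k : ℕ} (S : Finset (Fin (k+1))) : Finset (Fin k) :=
  Finset.univ.filter fun j => j.castSucc ∈ S

lemma mem_down {k : ℕ} {S : Finset (Fin (k+1))} {j : Fin k} :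
    j ∈ down S ↔ j.castSucc ∈ S := by simp [down]

lemma down_card {k : ℕ} (S : Finset (Fin (k+1))) :
    (down S).card = (S.erase (Fin.last k)).card := by
  rw [← Finset.card_image_of_injective (down S) (Fin.castSucc_injective k)]
  congr 1
  ext i
  simp only [Finset.mem_image, Finset.mem_erase, mem_down]
  constructor
  · rintro ⟨j, hj, rfl⟩
    exact ⟨(Fin.castSucc_lt_last j).ne, hj⟩
  · rintro ⟨hne, hi⟩
    exact ⟨i.castPred hne, by rwa [Fin.castSucc_castPred], Fin.castSucc_castPred i hne⟩

lemma snoc_cond {k : ℕ} (S : Finset (Fin (k+1))) (ω : Fin k → Bool) (b : Bool) :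
    (∀ i ∈ S, (Fin.snoc ω b : Fin (k+1) → Bool) i = true)
      ↔ ((Fin.last k ∈ S → b = true) ∧ ∀ j ∈ down S, ω j = true) := by
  constructor
  · intro h
    refine ⟨fun hl => by simpa using h _ hl, fun j hj => by simpa using h _ (mem_down.mp hj)⟩
  · rintro ⟨h1, h2⟩ i hi
    rcases Fin.eq_castSucc_or_eq_last i with ⟨j, rfl⟩ | rfl
    · rw [Fin.snoc_castSucc]; exact h2 j (mem_down.mpr hi)
    · rw [Fin.snoc_last]; exact h1 hi

lemma res_true_upper {k : ℕ} (S : Finset (Fin (k+1))) (x : G) :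
    res true (upperFaceConfig S x) = upperFaceConfig (down S) x := by
  funext ω
  show (if ∀ i ∈ S, (Fin.snoc ω true : Fin (k+1) → Bool) i = true then x else 1)
      = (if ∀ j ∈ down S, ω j = true then x else 1)
  exact if_congr ((snoc_cond S ω true).trans (by simp)) rfl rfl

lemma res_false_upper_of_not_mem {k : ℕ} {S : Finset (Fin (k+1))} (x : G)
    (h : Fin.last k ∉ S) :
    res false (upperFaceConfig S x) = upperFaceConfig (down S) x := by
  funext ω
  show (if ∀ i ∈ S, (Fin.snoc ω false : Fin (k+1) → Bool) i = true then x else 1)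
      = (if ∀ j ∈ down S, ω j = true then x else 1)
  exact if_congr ((snoc_cond S ω false).trans (by simp [h])) rfl rfl

lemma res_false_upper_of_mem {k : ℕ} {S : Finset (Fin (k+1))} (x : G)
    (h : Fin.last k ∈ S) :
    res false (upperFaceConfig S x) = 1 := by
  funext ω
  show (if ∀ i ∈ S, (Fin.snoc ω false : Fin (k+1) → Bool) i = true then x else 1) = 1
  rw [if_neg]
  intro hcond
  exact absurd (((snoc_cond S ω false).mp hcond).1 h) (by simp)

lemma res_der_mem (Gf : ℕ → Subgroup G)
    (hmono : ∀ i, Gf (i+1) ≤ Gf i) (hcomm : ∀ i j, ⁅Gf i, Gf j⁆ ≤ Gf (i+j)) (k : ℕ)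
    {c : (Fin (k+1) → Bool) → G} (hc : c ∈ hostKra Gf (k+1)) :
    res false c ∈ hostKra Gf k ∧
      (res false c)⁻¹ * res true c ∈ hostKra (fun i => Gf (i+1)) k := by
  rw [hostKra_def] at hc
  induction hc using Subgroup.closure_induction with
  | mem g hg =>
    obtain ⟨S, x, hx, rfl⟩ := hg
    by_cases hl : Fin.last k ∈ S
    · rw [res_false_upper_of_mem x hl, res_true_upper]
      refine ⟨one_mem _, ?_⟩
      rw [inv_one, one_mul]
      refine upper_mem _ _ ?_
      show x ∈ Gf ((down S).card + 1)
      have hcard : (down S).card + 1 = S.card := by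
        rw [down_card, Finset.card_erase_of_mem hl]
        have := Finset.card_pos.mpr ⟨_, hl⟩
        omega
      rwa [hcard]
    · rw [res_false_upper_of_not_mem x hl, res_true_upper]
      have hcard : (down S).card = S.card := by
        rw [down_card, Finset.erase_eq_of_notMem hl]
      refine ⟨upper_mem _ _ (by rwa [hcard]), ?_⟩
      rw [inv_mul_cancel]
      exact one_mem _
  | one =>
    refine ⟨by rw [map_one]; exact one_mem _, ?_⟩
    rw [map_one, map_one, inv_one, one_mul]
    exact one_mem _
  | mul a b ha hb pa pb =>
    obtain ⟨pa0, pad⟩ := pa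
    obtain ⟨pb0, pbd⟩ := pb
    refine ⟨by rw [map_mul]; exact mul_mem pa0 pb0, ?_⟩
    have e : (res false (a*b))⁻¹ * res true (a*b)
        = ((res false b)⁻¹ * ((res false a)⁻¹ * res true a) * ((res false b)⁻¹)⁻¹)
          * ((res false b)⁻¹ * res true b) := by
      rw [map_mul, map_mul]; group
    rw [e]
    refine mul_mem ?_ pbd
    exact conj_mem_hostKra Gf hmono hcomm k (inv_mem pb0) pad
  | inv a ha pa =>
    obtain ⟨pa0, pad⟩ := pa
    refine ⟨by rw [map_inv]; exact inv_mem pa0, ?_⟩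
    have e : (res false a⁻¹)⁻¹ * res true a⁻¹
        = res false a * ((res false a)⁻¹ * res true a)⁻¹ * (res false a)⁻¹ := by
      rw [map_inv, map_inv]; group
    rw [e]
    exact conj_mem_hostKra Gf hmono hcomm k pa0 (inv_mem pad)

lemma eval_mem (Gf : ℕ → Subgroup G) (hmono : ∀ i, Gf (i+1) ≤ Gf i) (k : ℕ)
    {c : (Fin k → Bool) → G} (hc : c ∈ hostKra Gf k) (ω : Fin k → Bool) :
    c ω ∈ Gf 0 := by
  rw [hostKra_def] at hc
  induction hc using Subgroup.closure_induction with
  | mem g hg =>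
    obtain ⟨S, x, hx, rfl⟩ := hg
    show (if ∀ i ∈ S, ω i = true then x else 1) ∈ Gf 0
    split_ifs
    · exact gf_antitone Gf hmono (Nat.zero_le _) hx
    · exact one_mem _
  | one => exact one_mem _
  | mul a b ha hb pa pb => exact mul_mem pa pb
  | inv a ha pa => exact inv_mem pa

lemma snoc_eq_snoc_iff {k : ℕ} {ω ω' : Fin k → Bool} {b b' : Bool} :
    (Fin.snoc ω b : Fin (k+1) → Bool) = Fin.snoc ω' b' ↔ ω = ω' ∧ b = b' := by
  constructor
  · intro h
    refine ⟨funext fun j => ?_, ?_⟩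
    · simpa using congrFun h j.castSucc
    · simpa using congrFun h (Fin.last k)
  · rintro ⟨rfl, rfl⟩; rfl

lemma vertex_forward : ∀ (k : ℕ) (Gf : ℕ → Subgroup G),
    (∀ i, Gf (i+1) ≤ Gf i) → (∀ i j, ⁅Gf i, Gf j⁆ ≤ Gf (i+j)) →
    ∀ (ω₀ : Fin k → Bool) (x : G),
    (fun ω => if ω = ω₀ then x else 1) ∈ hostKra Gf k → x ∈ Gf k := by
  intro k
  induction k with
  | zero =>
    intro Gf hmono hcomm ω₀ x hx
    have h := eval_mem Gf hmono 0 hx ω₀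
    simpa using h
  | succ k ih =>
    intro Gf hmono hcomm ω₀ x hx
    obtain ⟨ω₁, b₀, rfl⟩ : ∃ ω₁ b₀, ω₀ = Fin.snoc ω₁ b₀ :=
      ⟨Fin.init ω₀, ω₀ (Fin.last k), (Fin.snoc_init_self ω₀).symm⟩
    obtain ⟨pr, pd⟩ := res_der_mem Gf hmono hcomm k hx
    have hres : ∀ b : Bool, res b (fun ω => if ω = Fin.snoc ω₁ b₀ then x else 1)
        = fun ω' => if ω' = ω₁ ∧ b = b₀ then x else 1 := by
      intro b; funext ω'
      show (if (Fin.snoc ω' b : Fin (k+1) → Bool) = Fin.snoc ω₁ b₀ then x else 1) = _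
      exact if_congr snoc_eq_snoc_iff rfl rfl
    rw [hres false, hres true] at pd
    cases b₀ with
    | true =>
      have e1 : (fun ω' => if ω' = ω₁ ∧ false = true then x else 1)
          = (1 : (Fin k → Bool) → G) := by funext ω'; simp
      have e2 : (fun ω' => if ω' = ω₁ ∧ true = true then x else 1)
          = fun ω' => if ω' = ω₁ then x else 1 := by funext ω'; simp
      rw [e1, e2, inv_one, one_mul] at pd
      exact ih (fun i => Gf (i+1)) (shift_mono Gf hmono) (shift_comm Gf hmono hcomm) ω₁ x pd
    | false =>
      have e1 : (fun ω' => if ω' = ω₁ ∧ true = false then x else 1)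
          = (1 : (Fin k → Bool) → G) := by funext ω'; simp
      have e2 : (fun ω' => if ω' = ω₁ ∧ (false : Bool) = false then x else 1)⁻¹
          = fun ω' => if ω' = ω₁ then x⁻¹ else 1 := by
        funext ω'
        show (if ω' = ω₁ ∧ (false : Bool) = false then x else 1)⁻¹ = _
        split_ifs with h1 h2 h2 <;> simp_all
      rw [e1, mul_one, e2] at pd
      have hx' := ih (fun i => Gf (i+1)) (shift_mono Gf hmono) (shift_comm Gf hmono hcomm) ω₁ x⁻¹ pd
      simpa using inv_mem hx'

lemma face_mem (Gf : ℕ → Subgroup G) (hmono : ∀ i, Gf (i+1) ≤ Gf i) (k : ℕ) :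
    ∀ (n : ℕ) (T : Finset (Fin k)) (ω₀ : Fin k → Bool) (x : G),
    (T.filter fun i => ω₀ i = false).card = n → x ∈ Gf T.card →
    (fun ω => if ∀ i ∈ T, ω i = ω₀ i then x else 1) ∈ hostKra Gf k := by
  intro n
  induction n with
  | zero =>
    intro T ω₀ x hn hx
    have hall : ∀ i ∈ T, ω₀ i = true := by
      intro i hi
      by_contra h
      have hmem : i ∈ T.filter fun i => ω₀ i = false :=
        Finset.mem_filter.mpr ⟨hi, by simpa using h⟩
      rw [Finset.card_eq_zero] at hn
      simp [hn] at hmem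
    have he : (fun ω => if ∀ i ∈ T, ω i = ω₀ i then x else 1) = upperFaceConfig T x := by
      funext ω
      refine if_congr ?_ rfl rfl
      constructor
      · intro h i hi; rw [h i hi]; exact hall i hi
      · intro h i hi; rw [h i hi, hall i hi]
    rw [he]
    exact upper_mem Gf T hx
  | succ n ih =>
    intro T ω₀ x hn hx
    have hne : (T.filter fun i => ω₀ i = false).Nonempty := by
      rw [← Finset.card_pos, hn]; omega
    obtain ⟨i, hi⟩ := hne
    rw [Finset.mem_filter] at hi
    obtain ⟨hiT, hif⟩ := hi
    set ω₁ := Function.update ω₀ i true with hω₁def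
    have key : (fun ω => if ∀ j ∈ T, ω j = ω₀ j then x else 1)
        = (fun ω : Fin k → Bool => if ∀ j ∈ T.erase i, ω j = ω₀ j then x else 1)
          * (fun ω : Fin k → Bool => if ∀ j ∈ T, ω j = ω₁ j then x else 1)⁻¹ := by
      funext ω
      have hA : (∀ j ∈ T, ω j = ω₀ j) ↔ (∀ j ∈ T.erase i, ω j = ω₀ j) ∧ ω i = false := by
        constructor
        · intro h
          exact ⟨fun j hj => h j (Finset.mem_of_mem_erase hj), by rw [h i hiT, hif]⟩
        · rintro ⟨h1, h2⟩ j hj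
          by_cases hji : j = i
          · subst hji; rw [h2, hif]
          · exact h1 j (Finset.mem_erase.mpr ⟨hji, hj⟩)
      have hC : (∀ j ∈ T, ω j = ω₁ j) ↔ (∀ j ∈ T.erase i, ω j = ω₀ j) ∧ ω i = true := by
        constructor
        · intro h
          refine ⟨fun j hj => ?_, ?_⟩
          · have hji := (Finset.mem_erase.mp hj).1
            rw [h j (Finset.mem_of_mem_erase hj), hω₁def, Function.update_of_ne hji]
          · rw [h i hiT, hω₁def, Function.update_self]
        · rintro ⟨h1, h2⟩ j hj
          by_cases hji : j = i
          · subst hji; rw [h2, hω₁def, Function.update_self]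
          · rw [hω₁def, Function.update_of_ne hji]
            exact h1 j (Finset.mem_erase.mpr ⟨hji, hj⟩)
      show (if ∀ j ∈ T, ω j = ω₀ j then x else 1)
          = (if ∀ j ∈ T.erase i, ω j = ω₀ j then x else 1)
            * (if ∀ j ∈ T, ω j = ω₁ j then x else 1)⁻¹
      by_cases hB : ∀ j ∈ T.erase i, ω j = ω₀ j
      · by_cases hωi : ω i = true
        · have hA' : ¬ (∀ j ∈ T, ω j = ω₀ j) := fun h => by
            have h2 := (hA.mp h).2; rw [hωi] at h2; exact Bool.noConfusion h2
          rw [if_neg hA', if_pos hB, if_pos (hC.mpr ⟨hB, hωi⟩)]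
          simp
        · have hωi' : ω i = false := by
            cases h : ω i
            · rfl
            · exact absurd h hωi
          have hC' : ¬ (∀ j ∈ T, ω j = ω₁ j) := fun h => hωi ((hC.mp h).2)
          rw [if_pos (hA.mpr ⟨hB, hωi'⟩), if_pos hB, if_neg hC']
          simp
      · have hA' : ¬ (∀ j ∈ T, ω j = ω₀ j) := fun h => hB (hA.mp h).1
        have hC' : ¬ (∀ j ∈ T, ω j = ω₁ j) := fun h => hB (hC.mp h).1
        rw [if_neg hA', if_neg hC', if_neg hB]
        simp
    rw [key]
    refine mul_mem ?_ (inv_mem ?_)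
    · refine ih (T.erase i) ω₀ x ?_ ?_
      · rw [Finset.filter_erase,
          Finset.card_erase_of_mem (Finset.mem_filter.mpr ⟨hiT, hif⟩), hn]
        omega
      · exact gf_antitone Gf hmono Finset.card_erase_le hx
    · refine ih T ω₁ x ?_ hx
      have hfe : (T.filter fun j => ω₁ j = false)
          = (T.filter fun j => ω₀ j = false).erase i := by
        ext j
        simp only [Finset.mem_filter, Finset.mem_erase]
        constructor
        · rintro ⟨hjT, hj⟩
          have hji : j ≠ i := fun h => by
            subst h; rw [hω₁def, Function.update_self] at hj; exact Bool.noConfusion hj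
          rw [hω₁def, Function.update_of_ne hji] at hj
          exact ⟨hji, hjT, hj⟩
        · rintro ⟨hji, hjT, hj⟩
          exact ⟨hjT, by rw [hω₁def, Function.update_of_ne hji]; exact hj⟩
      rw [hfe, Finset.card_erase_of_mem (Finset.mem_filter.mpr ⟨hiT, hif⟩), hn]
      omega

end HKaux

/-- For a filtered group of degree `s` and `k ≥ 2`, a configuration supported
at a single vertex `ω₀` with value `x` lies in `HK^k(G_•)` if and only if `x ∈ G_k`
(equivalently, `x` is the identity when `k > s`). -/
theorem vertex_config_mem_hostKra_iff {G : Type*} [Group G] (Gf : ℕ → Subgroup G) (s k : ℕ)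
    (hf : IsGroupFiltration Gf) (hdeg : Gf (s + 1) = ⊥) (hk : 2 ≤ k)
    (ω₀ : Fin k → Bool) (x : G) :
    (fun ω => if ω = ω₀ then x else 1) ∈ hostKra Gf k ↔ x ∈ Gf k := by
  constructor
  · exact fun h => HKaux.vertex_forward k Gf hf.mono hf.comm ω₀ x h
  · intro hx
    have h1 : (fun ω => if ω = ω₀ then x else 1)
        = fun ω => if ∀ i ∈ (Finset.univ : Finset (Fin k)), ω i = ω₀ i then x else 1 := by
      funext ω
      refine if_congr ?_ rfl rfl
      simp [funext_iff]
    rw [h1]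
    refine HKaux.face_mem Gf hf.mono k _ Finset.univ ω₀ x rfl ?_
    simpa using hx
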